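/- Let Σ be an n×n symmetric positive definite real matrix, X an n×p real matrix of full column rank p with n > p, and W an n×(n−p) real matrix satisfying WᵀW = I_{n−p} and XᵀW = 0 (the p×(n−p) zero matrix). Then WᵀΣW is invertible and Σ⁻¹ − Σ⁻¹X(XᵀΣ⁻¹X)⁻¹XᵀΣ⁻¹ = W(WᵀΣW)⁻¹Wᵀ. -/

import Mathlib

open Matrix

private lemma mulVec_inj_of_rank {n p : ℕ} (X : Matrix (Fin n) (Fin p) ℝ)
    (hX : X.rank = p) : Function.Injective X.mulVec := by
  have h := LinearMap.finrank_range_add_finrank_ker X.mulVecLin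
  have hrk : X.rank = Module.finrank ℝ (LinearMap.range X.mulVecLin) := rfl
  rw [← hrk, hX, Module.finrank_pi, Fintype.card_fin] at h
  have hker : Module.finrank ℝ (LinearMap.ker X.mulVecLin) = 0 := by omega
  have hbot : LinearMap.ker X.mulVecLin = ⊥ := Submodule.finrank_eq_zero.mp hker
  have hinj := LinearMap.ker_eq_bot.mp hbot
  intro a b hab
  exact hinj hab

private lemma posDef_conj {n m : ℕ} {A : Matrix (Fin n) (Fin n) ℝ} (hA : A.PosDef)
    (B : Matrix (Fin n) (Fin m) ℝ) (hB : Function.Injective B.mulVec) :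
    (Bᵀ * A * B).PosDef := by
  rw [Matrix.posDef_iff_dotProduct_mulVec]
  constructor
  · have h := Matrix.isHermitian_conjTranspose_mul_mul B hA.1
    simpa [Matrix.conjTranspose_eq_transpose_of_trivial] using h
  · intro x hx
    have hBx : B *ᵥ x ≠ 0 := fun h => hx (hB (by simpa using h))
    have h2 := hA.dotProduct_mulVec_pos hBx
    rw [star_trivial] at h2 ⊢
    rwa [show (Bᵀ * A * B) *ᵥ x = Bᵀ *ᵥ (A *ᵥ (B *ᵥ x)) by
        rw [← Matrix.mulVec_mulVec, ← Matrix.mulVec_mulVec],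
      Matrix.dotProduct_mulVec, Matrix.vecMul_transpose]

theorem stmt_7 (n p : ℕ) (hnp : p < n)
    (S : Matrix (Fin n) (Fin n) ℝ) (hS : S.PosDef)
    (X : Matrix (Fin n) (Fin p) ℝ) (hX : X.rank = p)
    (W : Matrix (Fin n) (Fin (n - p)) ℝ) (hW : Wᵀ * W = 1) (hXW : Xᵀ * W = 0) :
    IsUnit (Wᵀ * S * W) ∧
    S⁻¹ - S⁻¹ * X * (Xᵀ * S⁻¹ * X)⁻¹ * Xᵀ * S⁻¹ = W * (Wᵀ * S * W)⁻¹ * Wᵀ := by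
  have hXinj : Function.Injective X.mulVec := mulVec_inj_of_rank X hX
  have hWinj : Function.Injective W.mulVec := by
    intro a b h
    have : (Wᵀ * W) *ᵥ a = (Wᵀ * W) *ᵥ b := by
      rw [← Matrix.mulVec_mulVec, ← Matrix.mulVec_mulVec, h]
    simpa [hW] using this
  have hSi : (S⁻¹).PosDef := hS.inv
  have hC : (Xᵀ * S⁻¹ * X).PosDef := posDef_conj hSi X hXinj
  have hD : (Wᵀ * S * W).PosDef := posDef_conj hS W hWinj
  have hXX : (Xᵀ * X).PosDef := by
    have := posDef_conj (Matrix.PosDef.one (n := Fin n) (R := ℝ)) X hXinj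
    simpa using this
  set C := Xᵀ * S⁻¹ * X with hCdef
  set D := Wᵀ * S * W with hDdef
  have hCd : IsUnit C.det := (Matrix.isUnit_iff_isUnit_det _).mp hC.isUnit
  have hDd : IsUnit D.det := (Matrix.isUnit_iff_isUnit_det _).mp hD.isUnit
  have hXXd : IsUnit (Xᵀ * X).det := (Matrix.isUnit_iff_isUnit_det _).mp hXX.isUnit
  have hSd : IsUnit S.det := (Matrix.isUnit_iff_isUnit_det _).mp hS.isUnit
  have hWX : Wᵀ * X = 0 := by
    have := congrArg Matrix.transpose hXW
    simpa using this
  -- the projection identity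
  have hP : X * ((Xᵀ * X)⁻¹ * Xᵀ) + W * Wᵀ = 1 := by
    have e : Fin n ≃ Fin p ⊕ Fin (n - p) :=
      (finCongr (by omega : n = p + (n - p))).trans finSumFinEquiv.symm
    have hNM : Matrix.fromRows ((Xᵀ * X)⁻¹ * Xᵀ) Wᵀ * Matrix.fromCols X W = 1 := by
      rw [show Matrix.fromRows ((Xᵀ * X)⁻¹ * Xᵀ) Wᵀ =
          (Matrix.fromBlocks (Xᵀ * X)⁻¹ 0 0 1 :
            Matrix (Fin p ⊕ Fin (n - p)) (Fin p ⊕ Fin (n - p)) ℝ) * Matrix.fromRows Xᵀ Wᵀ by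
        rw [Matrix.fromBlocks_mul_fromRows]; simp]
      rw [Matrix.mul_assoc, Matrix.fromRows_mul_fromCols, hXW, hWX, hW,
        Matrix.fromBlocks_multiply]
      simp [Matrix.nonsing_inv_mul _ hXXd, ← Matrix.fromBlocks_one]
    have hMN := (Matrix.fromCols_mul_fromRows_eq_one_comm e X W
      ((Xᵀ * X)⁻¹ * Xᵀ) Wᵀ).mpr hNM
    rwa [Matrix.fromCols_mul_fromRows] at hMN
  set A := S⁻¹ - S⁻¹ * X * C⁻¹ * Xᵀ * S⁻¹ with hAdef
  have hAX : A * X = 0 := by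
    rw [hAdef, Matrix.sub_mul]
    have h1 : S⁻¹ * X * C⁻¹ * Xᵀ * S⁻¹ * X = S⁻¹ * X * (C⁻¹ * C) := by
      simp only [hCdef, Matrix.mul_assoc]
    rw [h1, Matrix.nonsing_inv_mul _ hCd, Matrix.mul_one, sub_self]
  have hXA : Xᵀ * A = 0 := by
    rw [hAdef, Matrix.mul_sub]
    have h1 : Xᵀ * (S⁻¹ * X * C⁻¹ * Xᵀ * S⁻¹) = C * (C⁻¹ * (Xᵀ * S⁻¹)) := by
      simp only [hCdef, Matrix.mul_assoc]
    rw [h1, Matrix.mul_nonsing_inv_cancel_left C _ hCd, sub_self]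
  have hAS : A * S = 1 - S⁻¹ * X * C⁻¹ * Xᵀ := by
    rw [hAdef, Matrix.sub_mul, Matrix.nonsing_inv_mul _ hSd, Matrix.mul_assoc,
      Matrix.nonsing_inv_mul _ hSd, Matrix.mul_one]
  have key1 : Wᵀ * (A * S) * W = 1 := by
    rw [hAS, Matrix.mul_sub, Matrix.sub_mul, Matrix.mul_one, hW]
    have : Wᵀ * (S⁻¹ * X * C⁻¹ * Xᵀ) * W = Wᵀ * (S⁻¹ * X * C⁻¹) * (Xᵀ * W) := by
      simp only [Matrix.mul_assoc]
    rw [this, hXW, Matrix.mul_zero, sub_zero]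
  have key2 : (Wᵀ * A * W) * D = 1 := by
    have expand : (Wᵀ * A * W) * D = Wᵀ * A * (W * Wᵀ) * (S * W) := by
      simp only [hDdef, Matrix.mul_assoc]
    have hWWt : W * Wᵀ = 1 - X * ((Xᵀ * X)⁻¹ * Xᵀ) := by
      rw [eq_sub_iff_add_eq, add_comm]; exact hP
    rw [expand, hWWt, Matrix.mul_sub, Matrix.mul_one, Matrix.sub_mul]
    have hz : Wᵀ * A * (X * ((Xᵀ * X)⁻¹ * Xᵀ)) * (S * W) = 0 := by
      have h2 : Wᵀ * A * (X * ((Xᵀ * X)⁻¹ * Xᵀ)) * (S * W)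
          = Wᵀ * (A * X) * ((Xᵀ * X)⁻¹ * (Xᵀ * (S * W))) := by
        simp only [Matrix.mul_assoc]
      rw [h2, hAX]
      simp
    rw [hz, sub_zero, ← key1]
    simp only [Matrix.mul_assoc]
  have hDinv : D⁻¹ = Wᵀ * A * W := Matrix.inv_eq_left_inv key2
  refine ⟨hD.isUnit, ?_⟩
  rw [hDinv]
  have hWWt : W * Wᵀ = 1 - X * ((Xᵀ * X)⁻¹ * Xᵀ) := by
    rw [eq_sub_iff_add_eq, add_comm]; exact hP
  have hsand : W * (Wᵀ * A * W) * Wᵀ = (W * Wᵀ) * A * (W * Wᵀ) := by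
    simp only [Matrix.mul_assoc]
  rw [hsand, hWWt]
  have hPA : X * ((Xᵀ * X)⁻¹ * Xᵀ) * A = 0 := by
    rw [Matrix.mul_assoc X, Matrix.mul_assoc (Xᵀ * X)⁻¹ Xᵀ A, hXA]
    simp
  have hAP : A * (X * ((Xᵀ * X)⁻¹ * Xᵀ)) = 0 := by
    rw [← Matrix.mul_assoc A X, hAX]; simp
  rw [Matrix.sub_mul, Matrix.one_mul, hPA, sub_zero, Matrix.mul_sub, Matrix.mul_one, hAP,
    sub_zero]
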